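/- Let B be a commutative Noetherian Poisson algebra over ℂ and J ⊆ B a Poisson ideal. Then every minimal prime ideal over J is a Poisson ideal. -/

import Mathlib

section Aux

variable {B : Type*} [CommRing B] [Algebra ℂ B]

private lemma aux_smul_mem (J : Ideal B) (r : ℂ) {x : B} (hx : x ∈ J) : r • x ∈ J := by
  rw [Algebra.smul_def]; exact J.mul_mem_left _ hx

private lemma aux_d_one (D : B →ₗ[ℂ] B)
    (hD : ∀ x y : B, D (x * y) = x * D y + y * D x) : D (1 : B) = 0 := by
  have h := hD 1 1
  rw [one_mul, one_mul] at h
  exact add_eq_left.mp h.symm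

/-- `D (x^m) = m * x^(m-1) * D x` (with natural subtraction; fine at `m = 0`). -/
private lemma aux_d_pow (D : B →ₗ[ℂ] B)
    (hD : ∀ x y : B, D (x * y) = x * D y + y * D x) (x : B) (m : ℕ) :
    D (x ^ m) = algebraMap ℂ B m * (x ^ (m - 1) * D x) := by
  induction m with
  | zero => simp [aux_d_one D hD]
  | succ m ih =>
    cases m with
    | zero => simp
    | succ m =>
      have hx : x ^ (m + 2) = x * x ^ (m + 1) := by ring
      rw [hx, hD, ih]
      simp only [Nat.add_sub_cancel]
      push_cast
      ring

/-- The radical of a differential ideal is differential (char 0). -/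
private lemma aux_radical_stable (D : B →ₗ[ℂ] B)
    (hD : ∀ x y : B, D (x * y) = x * D y + y * D x)
    (J : Ideal B) (hJ : ∀ x ∈ J, D x ∈ J) :
    ∀ a ∈ J.radical, D a ∈ J.radical := by
  intro a ha
  obtain ⟨n, hn⟩ := Ideal.mem_radical_iff.mp ha
  have key : ∀ k, k ≤ n → a ^ (n - k) * D a ^ (2 * k) ∈ J := by
    intro k
    induction k with
    | zero => intro _; simpa using hn
    | succ k ih =>
      intro hk
      have hk' : k ≤ n := Nat.le_of_succ_le hk
      have h0 := ih hk'
      have h1 : D (a ^ (n - k) * D a ^ (2 * k)) ∈ J := hJ _ h0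
      rw [hD, aux_d_pow D hD, aux_d_pow D hD] at h1
      have h2 := J.mul_mem_left (D a) h1
      -- the "second derivative" term lies in J
      have ht1 : D a * (a ^ (n - k) *
          (algebraMap ℂ B ((2 * k : ℕ) : ℂ) * (D a ^ (2 * k - 1) * D (D a)))) ∈ J := by
        rcases Nat.eq_zero_or_pos k with h | h
        · subst h; simp
        · have hpow : D a * D a ^ (2 * k - 1) = D a ^ (2 * k) := by
            rw [← pow_succ']
            congr 1
            omega
          have heq : D a * (a ^ (n - k) *
              (algebraMap ℂ B ((2 * k : ℕ) : ℂ) * (D a ^ (2 * k - 1) * D (D a)))) =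
              (algebraMap ℂ B ((2 * k : ℕ) : ℂ) * D (D a)) *
                (a ^ (n - k) * D a ^ (2 * k)) := by
            rw [← hpow]; ring
          rw [heq]
          exact J.mul_mem_left _ h0
      -- isolate the main term
      have hmain : algebraMap ℂ B ((n - k : ℕ) : ℂ) *
          (a ^ (n - (k + 1)) * D a ^ (2 * (k + 1))) ∈ J := by
        have heq : algebraMap ℂ B ((n - k : ℕ) : ℂ) *
            (a ^ (n - (k + 1)) * D a ^ (2 * (k + 1))) =
            D a * (a ^ (n - k) * (algebraMap ℂ B ((2 * k : ℕ) : ℂ) * (D a ^ (2 * k - 1) * D (D a))) +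
              D a ^ (2 * k) * (algebraMap ℂ B ((n - k : ℕ) : ℂ) * (a ^ (n - k - 1) * D a))) -
            D a * (a ^ (n - k) *
              (algebraMap ℂ B ((2 * k : ℕ) : ℂ) * (D a ^ (2 * k - 1) * D (D a)))) := by
          have e1 : n - (k + 1) = n - k - 1 := by omega
          have e2 : 2 * (k + 1) = (2 * k) + 2 := by ring
          rw [e1, e2, pow_add]
          ring
        rw [heq]
        exact Ideal.sub_mem J h2 ht1
      -- divide by the nonzero scalar n - k
      have hne : ((n - k : ℕ) : ℂ) ≠ 0 := by
        have : n - k ≠ 0 := by omega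
        exact_mod_cast Nat.cast_ne_zero.mpr this
      have hsm : algebraMap ℂ B ((n - k : ℕ) : ℂ) * (a ^ (n - (k + 1)) * D a ^ (2 * (k + 1))) =
          ((n - k : ℕ) : ℂ) • (a ^ (n - (k + 1)) * D a ^ (2 * (k + 1))) := by
        rw [Algebra.smul_def]
      rw [hsm] at hmain
      have := aux_smul_mem J (((n - k : ℕ) : ℂ))⁻¹ hmain
      rwa [smul_smul, inv_mul_cancel₀ hne, one_smul] at this
  have hfin := key n le_rfl
  simp only [Nat.sub_self, pow_zero, one_mul] at hfin
  exact Ideal.mem_radical_iff.mpr ⟨2 * n, hfin⟩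

/-- In a radical differential ideal, `x*y ∈ I` implies `x * D y ∈ I`. -/
private lemma aux_mul_deriv (D : B →ₗ[ℂ] B)
    (hD : ∀ x y : B, D (x * y) = x * D y + y * D x)
    (I : Ideal B) (hrad : I.radical = I) (hI : ∀ x ∈ I, D x ∈ I)
    {x y : B} (hxy : x * y ∈ I) : x * D y ∈ I := by
  have h1 : x * D y + y * D x ∈ I := by
    rw [← hD]; exact hI _ hxy
  have h2 : (x * D y) * (x * D y + y * D x) ∈ I := I.mul_mem_left _ h1
  have h3 : (x * y) * (D x * D y) ∈ I := I.mul_mem_right _ hxy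
  have h4 : (x * D y) ^ 2 ∈ I := by
    have heq : (x * D y) ^ 2 =
        (x * D y) * (x * D y + y * D x) - (x * y) * (D x * D y) := by ring
    rw [heq]
    exact Ideal.sub_mem I h2 h3
  rw [← hrad]
  exact Ideal.mem_radical_iff.mpr ⟨2, h4⟩

end Aux

/-- If `B` is a commutative Noetherian Poisson algebra over `ℂ` and `J` is a
Poisson ideal, then every minimal prime over `J` is a Poisson ideal. -/
theorem minimalPrimes_of_poisson_ideal_are_poisson
    (B : Type*) [CommRing B] [Algebra ℂ B] [IsNoetherianRing B]
    (bracket : B →ₗ[ℂ] B →ₗ[ℂ] B)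
    (antisymm : ∀ a b : B, bracket a b = - bracket b a)
    (jacobi : ∀ a b c : B,
      bracket a (bracket b c) = bracket (bracket a b) c + bracket b (bracket a c))
    (leibniz : ∀ a b c : B, bracket (a * b) c = a * bracket b c + b * bracket a c)
    (J : Ideal B) (hJ : ∀ a ∈ J, ∀ b : B, bracket a b ∈ J) :
    ∀ P ∈ J.minimalPrimes, ∀ a ∈ P, ∀ b : B, bracket a b ∈ P := by
  classical
  intro P hP a haP c
  haveI hPprime : P.IsPrime := hP.1.1
  -- The derivation x ↦ {x, c}
  set D : B →ₗ[ℂ] B := bracket.flip c with hDdef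
  have hD : ∀ x y : B, D (x * y) = x * D y + y * D x := by
    intro x y
    simpa [hDdef] using leibniz x y c
  have hJD : ∀ x ∈ J, D x ∈ J := fun x hx => hJ x hx c
  -- the radical of J is D-stable and radical
  have hradD := aux_radical_stable D hD J hJD
  have hradrad : J.radical.radical = J.radical := Ideal.radical_idem J
  -- finiteness of minimal primes
  have hfin : J.minimalPrimes.Finite := by
    rw [Ideal.minimalPrimes_eq_comap]
    exact ((minimalPrimes.finite_of_isNoetherianRing (B ⧸ J)).image _)
  -- pick b in all other minimal primes but not in P
  set T : Finset (Ideal B) := hfin.toFinset with hT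
  have hPT : P ∈ T := by simp [hT, hP]
  have hnot : ¬ (T.erase P).inf id ≤ P := by
    intro hle
    obtain ⟨Q, hQ, hQle⟩ := (hPprime.inf_le').mp hle
    have hQmem : Q ∈ J.minimalPrimes := by
      have := Finset.mem_of_mem_erase hQ
      simpa [hT] using this
    have hQP : Q ≠ P := Finset.ne_of_mem_erase hQ
    exact hQP (le_antisymm hQle (hP.2 ⟨hQmem.1.1, hQmem.1.2⟩ hQle))
  obtain ⟨b, hbmem, hbP⟩ := SetLike.not_le_iff_exists.mp hnot
  -- a * b is in every minimal prime, hence in the radical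
  have hab : b * a ∈ J.radical := by
    rw [← Ideal.sInf_minimalPrimes, Ideal.mem_sInf]
    intro Q hQ
    by_cases hQP : Q = P
    · subst hQP
      exact Q.mul_mem_left b haP
    · have hQT : Q ∈ T.erase P := by
        refine Finset.mem_erase.mpr ⟨hQP, ?_⟩
        simp [hT, hQ]
      have : (T.erase P).inf id ≤ Q := Finset.inf_le hQT
      exact Q.mul_mem_right a (this hbmem)
  -- hence b * D a ∈ radical ⊆ P
  have hbDa : b * D a ∈ J.radical := aux_mul_deriv D hD J.radical hradrad hradD hab
  have hradP : J.radical ≤ P := by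
    rw [← Ideal.sInf_minimalPrimes]
    exact sInf_le hP
  have := hradP hbDa
  rcases hPprime.mem_or_mem this with h | h
  · exact absurd h hbP
  · simpa [hDdef] using h
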